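/- (Theorem 4.1, part 1: BIBO stabilization of retarded systems with time-varying delays.) Let M_inf^K ≥ 0 be such that ‖𝒦∗φ‖_∞ ≤ M_inf^K·‖φ‖_∞ for every bounded φ : ℝ → ℂ^n vanishing on (−∞,0]. Let M_inf^cl ≥ 0 be such that for every bounded w : ℝ → ℂ^n and every closed-loop auxiliary solution z with input w for which z and ż are bounded, one has both ‖z‖_∞ ≤ M_inf^cl·‖w‖_∞ and ‖ż‖_∞ ≤ M_inf^cl·‖w‖_∞; let M_inf^clnom, M_inf^clnomd ≥ 0 be analogous gains bounding ‖v‖_∞ and ‖v̇‖_∞ by multiples of ‖r‖_∞ for closed-loop nominal solutions v with reference r. Assume M_inf^cl·( Σ_{j=1}^J μ_j‖A_j‖ + Σ_{k=1}^K ν_k‖B_k‖·M_inf^K + ε·‖h‖_∞ ) < 1. Then there exists C ≥ 0, depending only on the data, such that for every bounded reference r vanishing on (−∞,0], every closed-loop nominal solution v satisfying the above gain bounds, and every closed-loop time-varying solution x with x and ẋ bounded, one has ‖x‖_∞ ≤ C·‖r‖_∞. -/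

import Mathlib

open MeasureTheory

/-- The supremum norm over `t > 0`. -/
noncomputable def supNorm {E : Type*} [NormedAddCommGroup E] (f : ℝ → E) : ℝ :=
  ⨆ t : Set.Ioi (0 : ℝ), ‖f (t : ℝ)‖

/-- A function `ℝ → E` is bounded. -/
def IsBddFun {E : Type*} [NormedAddCommGroup E] (f : ℝ → E) : Prop :=
  ∃ C, ∀ t, ‖f t‖ ≤ C

/-- Convolution of the controller kernel `𝒦` (a matrix-valued measure, given by
a density `k` with respect to a positive measure `μK`) with a signal `φ`:
`(𝒦∗φ)(t) = ∫ d𝒦(θ) φ(t−θ)`. -/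
noncomputable def Kconv {n p : ℕ} (μK : Measure ℝ)
    (k : ℝ → EuclideanSpace ℂ (Fin n) →L[ℂ] EuclideanSpace ℂ (Fin p))
    (φ : ℝ → EuclideanSpace ℂ (Fin n)) (t : ℝ) : EuclideanSpace ℂ (Fin p) :=
  ∫ θ, (k θ) (φ (t - θ)) ∂μK

set_option maxHeartbeats 1000000

namespace Stmt4Aux

variable {E : Type*} [NormedAddCommGroup E]

lemma supNorm_le {f : ℝ → E} {C : ℝ} (h : ∀ t > (0:ℝ), ‖f t‖ ≤ C) : supNorm f ≤ C := by
  haveI : Nonempty (Set.Ioi (0:ℝ)) := ⟨⟨1, by norm_num⟩⟩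
  exact ciSup_le fun t => h t t.2

lemma norm_le_supNorm {f : ℝ → E} (hb : IsBddFun f) {t : ℝ} (ht : 0 < t) :
    ‖f t‖ ≤ supNorm f := by
  obtain ⟨C, hC⟩ := hb
  exact le_ciSup (f := fun s : Set.Ioi (0:ℝ) => ‖f (s:ℝ)‖)
    ⟨C, by rintro y ⟨s, rfl⟩; exact hC s⟩ (⟨t, ht⟩ : Set.Ioi (0:ℝ))

lemma supNorm_nonneg {f : ℝ → E} (hb : IsBddFun f) : 0 ≤ supNorm f :=
  le_trans (norm_nonneg (f 1)) (norm_le_supNorm hb one_pos)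

lemma norm_le_supNorm' {f : ℝ → E} (hb : IsBddFun f) (h0 : ∀ t ≤ (0:ℝ), f t = 0)
    (t : ℝ) : ‖f t‖ ≤ supNorm f := by
  rcases le_or_gt t 0 with ht | ht
  · rw [h0 t ht]; simpa using supNorm_nonneg hb
  · exact norm_le_supNorm hb ht

variable [NormedSpace ℝ E]

lemma deriv_zero_of_nonpos {f f' : ℝ → E} (hf : ∀ t, HasDerivAt f (f' t) t)
    (h0 : ∀ t ≤ (0:ℝ), f t = 0) : ∀ t ≤ (0:ℝ), f' t = 0 := by
  intro t ht
  rcases eq_or_lt_of_le ht with heq | ht'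
  · subst heq
    have h1 : HasDerivWithinAt f (f' 0) (Set.Iic (0:ℝ)) 0 := (hf 0).hasDerivWithinAt
    have h2 : HasDerivWithinAt f 0 (Set.Iic (0:ℝ)) 0 := by
      have hc : HasDerivWithinAt (fun _ : ℝ => (0:E)) 0 (Set.Iic (0:ℝ)) 0 :=
        hasDerivWithinAt_const _ _ _
      exact hc.congr (fun s hs => h0 s hs) (h0 0 le_rfl)
    have hu : UniqueDiffWithinAt ℝ (Set.Iic (0:ℝ)) 0 := uniqueDiffOn_Iic 0 0 Set.self_mem_Iic
    rw [← h1.derivWithin hu, h2.derivWithin hu]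
  · have hev : f =ᶠ[nhds t] fun _ => (0:E) := by
      filter_upwards [Iio_mem_nhds ht'] with s hs using h0 s (le_of_lt hs)
    have : HasDerivAt f 0 t := (hasDerivAt_const t (0:E)).congr_of_eventuallyEq hev
    exact (hf t).unique this

lemma lip_of_deriv {f f' : ℝ → E} (hf : ∀ t, HasDerivAt f (f' t) t) {M : ℝ}
    (hM : ∀ t, ‖f' t‖ ≤ M) (a b : ℝ) : ‖f b - f a‖ ≤ M * |b - a| := by
  have := Convex.norm_image_sub_le_of_norm_hasDerivWithin_le
    (f := f) (f' := f') (s := Set.univ)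
    (fun s _ => (hf s).hasDerivWithinAt) (fun s _ => hM s) convex_univ
    (Set.mem_univ a) (Set.mem_univ b)
  simpa [Real.norm_eq_abs] using this

section KconvLemmas

variable {n p : ℕ} {μK : Measure ℝ} [IsFiniteMeasure μK]
  {k : ℝ → EuclideanSpace ℂ (Fin n) →L[ℂ] EuclideanSpace ℂ (Fin p)}

lemma kconv_integrable (hk : StronglyMeasurable k) {Ck : ℝ} (hCk : ∀ θ, ‖k θ‖ ≤ Ck)
    {f : ℝ → EuclideanSpace ℂ (Fin n)} (hf : Continuous f) {Cf : ℝ}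
    (hCf : ∀ s, ‖f s‖ ≤ Cf) (a : ℝ) :
    Integrable (fun θ => (k θ) (f (a - θ))) μK := by
  have hm : StronglyMeasurable fun θ => (k θ) (f (a - θ)) := by
    have h1 : StronglyMeasurable fun θ => ((k θ), f (a - θ)) :=
      hk.prodMk ((hf.comp (continuous_const.sub continuous_id)).stronglyMeasurable)
    exact (isBoundedBilinearMap_apply.continuous).comp_stronglyMeasurable h1
  refine ⟨hm.aestronglyMeasurable, ?_⟩
  refine HasFiniteIntegral.of_bounded (C := Ck * Cf) ?_
  filter_upwards with θ
  calc ‖(k θ) (f (a - θ))‖ ≤ ‖k θ‖ * ‖f (a - θ)‖ := (k θ).le_opNorm _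
    _ ≤ Ck * Cf := mul_le_mul (hCk θ) (hCf _) (norm_nonneg _)
        (le_trans (norm_nonneg _) (hCk 0))

lemma kconv_norm_le {Ck : ℝ} (hCk : ∀ θ, ‖k θ‖ ≤ Ck)
    {f : ℝ → EuclideanSpace ℂ (Fin n)} {Cf : ℝ} (hCf : ∀ s, ‖f s‖ ≤ Cf) (t : ℝ) :
    ‖Kconv μK k f t‖ ≤ Ck * Cf * (μK Set.univ).toReal := by
  refine norm_integral_le_of_norm_le_const ?_
  filter_upwards with θ
  calc ‖(k θ) (f (t - θ))‖ ≤ ‖k θ‖ * ‖f (t - θ)‖ := (k θ).le_opNorm _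
    _ ≤ Ck * Cf := mul_le_mul (hCk θ) (hCf _) (norm_nonneg _)
        (le_trans (norm_nonneg _) (hCk 0))

lemma kconv_zero (hsupp : μK (Set.Iio 0) = 0)
    {f : ℝ → EuclideanSpace ℂ (Fin n)} (h0 : ∀ s ≤ (0:ℝ), f s = 0)
    {t : ℝ} (ht : t ≤ 0) : Kconv μK k f t = 0 := by
  unfold Kconv
  have hae : ∀ᵐ θ ∂μK, θ ∉ Set.Iio (0:ℝ) := (MeasureTheory.measure_eq_zero_iff_ae_notMem).mp hsupp
  have : ∀ᵐ θ ∂μK, (k θ) (f (t - θ)) = 0 := by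
    filter_upwards [hae] with θ hθ
    have hθ0 : (0:ℝ) ≤ θ := not_lt.mp (by simpa using hθ)
    rw [h0 (t - θ) (by linarith), map_zero]
  exact integral_eq_zero_of_ae this

lemma kconv_shift (f : ℝ → EuclideanSpace ℂ (Fin n)) (a t : ℝ) :
    Kconv μK k (fun u => f (u - a)) t = Kconv μK k f (t - a) := by
  unfold Kconv
  refine integral_congr_ae (Filter.Eventually.of_forall fun θ => ?_)
  congr 1
  ring

lemma kconv_sub (hk : StronglyMeasurable k) {Ck : ℝ} (hCk : ∀ θ, ‖k θ‖ ≤ Ck)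
    {f g : ℝ → EuclideanSpace ℂ (Fin n)} (hfc : Continuous f) (hgc : Continuous g)
    {Cf Cg : ℝ} (hCf : ∀ s, ‖f s‖ ≤ Cf) (hCg : ∀ s, ‖g s‖ ≤ Cg) (t : ℝ) :
    Kconv μK k (fun u => f u - g u) t = Kconv μK k f t - Kconv μK k g t := by
  unfold Kconv
  simp only [map_sub]
  exact integral_sub (kconv_integrable hk hCk hfc hCf t) (kconv_integrable hk hCk hgc hCg t)

end KconvLemmas

end Stmt4Aux

open Stmt4Aux

/-- (Theorem 4.1, part 1: BIBO stabilization of retarded systems with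
time-varying delays by a stable controller `u = 𝒦∗x + r`.) -/
theorem stmt_4 (n p J K : ℕ)
    (A : EuclideanSpace ℂ (Fin n) →L[ℂ] EuclideanSpace ℂ (Fin n))
    (Aj : Fin J → EuclideanSpace ℂ (Fin n) →L[ℂ] EuclideanSpace ℂ (Fin n))
    (B : EuclideanSpace ℂ (Fin p) →L[ℂ] EuclideanSpace ℂ (Fin n))
    (Bk : Fin K → EuclideanSpace ℂ (Fin p) →L[ℂ] EuclideanSpace ℂ (Fin n))
    (D ε : ℝ) (hε0 : 0 ≤ ε) (hεD : ε ≤ D)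
    (hd μ : Fin J → ℝ) (hμ0 : ∀ j, 0 ≤ μ j) (hμh : ∀ j, μ j ≤ hd j)
    (T ν : Fin K → ℝ) (hν0 : ∀ k, 0 ≤ ν k) (hνT : ∀ k, ν k ≤ T k)
    (h : ℝ → ℂ) (hcont : ContinuousOn h (Set.Icc 0 (D + ε)))
    (hNorm : ℝ) (hhNorm : hNorm = ⨆ θ : Set.Icc (0 : ℝ) (D + ε), ‖h (θ : ℝ)‖)
    (τ : Fin J → ℝ → ℝ) (hτm : ∀ j, Measurable (τ j))
    (hτb : ∀ j t, hd j - μ j ≤ τ j t ∧ τ j t ≤ hd j + μ j)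
    (σ : Fin K → ℝ → ℝ) (hσm : ∀ k, Measurable (σ k))
    (hσb : ∀ k t, T k - ν k ≤ σ k t ∧ σ k t ≤ T k + ν k)
    (δ : ℝ → ℝ) (hδm : Measurable δ) (hδb : ∀ t, D - ε ≤ δ t ∧ δ t ≤ D + ε)
    -- the controller: a finite kernel measure supported on `[0,∞)`
    (μK : Measure ℝ) [IsFiniteMeasure μK] (hμKsupp : μK (Set.Iio 0) = 0)
    (k : ℝ → EuclideanSpace ℂ (Fin n) →L[ℂ] EuclideanSpace ℂ (Fin p))
    (hkmeas : StronglyMeasurable k) (hkbdd : ∃ Ck, ∀ θ, ‖k θ‖ ≤ Ck)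
    (MK Mcl Mclnom Mclnomd : ℝ)
    (hMK0 : 0 ≤ MK) (hMcl0 : 0 ≤ Mcl) (hMclnom0 : 0 ≤ Mclnom)
    (hMclnomd0 : 0 ≤ Mclnomd)
    -- the `L∞` gain of the controller
    (hKgain : ∀ φ : ℝ → EuclideanSpace ℂ (Fin n),
      IsBddFun φ → (∀ t ≤ (0 : ℝ), φ t = 0) →
      supNorm (Kconv μK k φ) ≤ MK * supNorm φ)
    -- gains of the closed-loop auxiliary system
    (haux : ∀ w z z' : ℝ → EuclideanSpace ℂ (Fin n),
      IsBddFun w →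
      (∀ t, HasDerivAt z (z' t) t) → (∀ t ≤ (0 : ℝ), z t = 0) →
      (∀ t > (0 : ℝ), z' t = A (z t) + ∑ j : Fin J, Aj j (z (t - hd j))
        + (∫ θ in (0 : ℝ)..D, h θ • z (t - θ))
        + B (Kconv μK k z t) + ∑ kk : Fin K, Bk kk (Kconv μK k z (t - T kk))
        + w t) →
      IsBddFun z → IsBddFun z' →
      supNorm z ≤ Mcl * supNorm w ∧ supNorm z' ≤ Mcl * supNorm w)
    -- the smallness condition
    (hsmall : Mcl * ((∑ j : Fin J, μ j * ‖Aj j‖)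
      + (∑ kk : Fin K, ν kk * ‖Bk kk‖) * MK + ε * hNorm) < 1) :
    ∃ C : ℝ, 0 ≤ C ∧
      ∀ r : ℝ → EuclideanSpace ℂ (Fin p), IsBddFun r → (∀ t ≤ (0 : ℝ), r t = 0) →
      ∀ v v' : ℝ → EuclideanSpace ℂ (Fin n),
        (∀ t, HasDerivAt v (v' t) t) → (∀ t ≤ (0 : ℝ), v t = 0) →
        -- `v` is the closed-loop nominal solution for the reference `r`
        (∀ t > (0 : ℝ), v' t = A (v t) + ∑ j : Fin J, Aj j (v (t - hd j))
          + (∫ θ in (0 : ℝ)..D, h θ • v (t - θ))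
          + B (Kconv μK k v t) + ∑ kk : Fin K, Bk kk (Kconv μK k v (t - T kk))
          + B (r t) + ∑ kk : Fin K, Bk kk (r (t - T kk))) →
        supNorm v ≤ Mclnom * supNorm r → supNorm v' ≤ Mclnomd * supNorm r →
      ∀ x x' : ℝ → EuclideanSpace ℂ (Fin n),
        (∀ t, HasDerivAt x (x' t) t) → (∀ t ≤ (0 : ℝ), x t = 0) →
        -- `x` is the closed-loop time-varying solution for the reference `r`
        (∀ t > (0 : ℝ), x' t = A (x t) + ∑ j : Fin J, Aj j (x (t - τ j t))
          + (∫ θ in (0 : ℝ)..(δ t), h θ • x (t - θ))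
          + B (Kconv μK k x t)
          + ∑ kk : Fin K, Bk kk (Kconv μK k x (t - σ kk t))
          + B (r t) + ∑ kk : Fin K, Bk kk (r (t - σ kk t))) →
        IsBddFun x → IsBddFun x' →
        supNorm x ≤ C * supNorm r := by
  classical
  obtain ⟨Ck, hCk⟩ := hkbdd
  have hCk0 : 0 ≤ Ck := le_trans (norm_nonneg _) (hCk 0)
  have hD0 : 0 ≤ D := le_trans hε0 hεD
  have hDε0 : 0 ≤ D + ε := by linarith
  -- bounds on h
  obtain ⟨Ch, hCh⟩ := isCompact_Icc.exists_bound_of_continuousOn hcont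
  have hbdd : BddAbove (Set.range fun θ : Set.Icc (0:ℝ) (D+ε) => ‖h (θ:ℝ)‖) := by
    refine ⟨Ch, ?_⟩; rintro y ⟨θ, rfl⟩; exact hCh θ θ.2
  have hhle : ∀ θ ∈ Set.Icc (0:ℝ) (D+ε), ‖h θ‖ ≤ hNorm := by
    intro θ hθ; rw [hhNorm]
    exact le_ciSup hbdd (⟨θ, hθ⟩ : Set.Icc (0:ℝ) (D+ε))
  have hNorm0 : 0 ≤ hNorm :=
    le_trans (norm_nonneg (h 0)) (hhle 0 ⟨le_rfl, hDε0⟩)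
  -- constants
  set SA : ℝ := ∑ j : Fin J, μ j * ‖Aj j‖ with hSA
  set SB : ℝ := ∑ kk : Fin K, ν kk * ‖Bk kk‖ with hSB
  set CB : ℝ := ‖B‖ + ∑ kk : Fin K, ‖Bk kk‖ with hCB
  have hSA0 : 0 ≤ SA := Finset.sum_nonneg fun j _ => mul_nonneg (hμ0 j) (norm_nonneg _)
  have hSB0 : 0 ≤ SB := Finset.sum_nonneg fun kk _ => mul_nonneg (hν0 kk) (norm_nonneg _)
  have hCB0 : 0 ≤ CB := add_nonneg (norm_nonneg _)
    (Finset.sum_nonneg fun kk _ => norm_nonneg _)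
  set κ : ℝ := SA + SB * MK + ε * hNorm with hκ
  have hκ0 : 0 ≤ κ := add_nonneg (add_nonneg hSA0 (mul_nonneg hSB0 hMK0)) (mul_nonneg hε0 hNorm0)
  have hden : 0 < 1 - Mcl * κ := by linarith
  refine ⟨Mcl * CB / (1 - Mcl * κ), div_nonneg (mul_nonneg hMcl0 hCB0) hden.le, ?_⟩
  intro r hrb hr0 v v' _ _ _ _ _ x x' hx hx0 heq hxb hx'b
  obtain ⟨Cx, hCx⟩ := id hxb
  have hCx0 : 0 ≤ Cx := le_trans (norm_nonneg _) (hCx 0)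
  have hxcont : Continuous x := by
    rw [continuous_iff_continuousAt]; exact fun t => (hx t).continuousAt
  set Mx : ℝ := supNorm x with hMx
  set Mx' : ℝ := supNorm x' with hMx'
  set Mr : ℝ := supNorm r with hMr
  have hMx0 : 0 ≤ Mx := supNorm_nonneg hxb
  have hMx'0 : 0 ≤ Mx' := supNorm_nonneg hx'b
  have hMr0 : 0 ≤ Mr := supNorm_nonneg hrb
  have hxle : ∀ s, ‖x s‖ ≤ Mx := norm_le_supNorm' hxb hx0
  have hrle : ∀ s, ‖r s‖ ≤ Mr := norm_le_supNorm' hrb hr0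
  have hx'le : ∀ s, ‖x' s‖ ≤ Mx' := by
    intro s
    rcases le_or_gt s 0 with hs | hs
    · rw [deriv_zero_of_nonpos hx hx0 s hs]; simpa using hMx'0
    · exact norm_le_supNorm hx'b hs
  have hlip : ∀ a b : ℝ, ‖x b - x a‖ ≤ Mx' * |b - a| := lip_of_deriv hx hx'le
  -- bounds on Kconv of x
  set KB : ℝ := Ck * Cx * (μK Set.univ).toReal with hKB
  have hKB0 : 0 ≤ KB := mul_nonneg (mul_nonneg hCk0 hCx0) ENNReal.toReal_nonneg
  have hKxb : ∀ s, ‖Kconv μK k x s‖ ≤ KB := kconv_norm_le hCk hCx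
  -- interval integral bounds
  have hIcont : ∀ t : ℝ, ContinuousOn (fun θ => h θ • x (t - θ)) (Set.Icc 0 (D+ε)) :=
    fun t => hcont.smul ((hxcont.comp (continuous_const.sub continuous_id)).continuousOn)
  have hIint : ∀ (t a b : ℝ), Set.uIcc a b ⊆ Set.Icc 0 (D+ε) →
      IntervalIntegrable (fun θ => h θ • x (t - θ)) MeasureTheory.volume a b :=
    fun t a b hsub => ((hIcont t).mono hsub).intervalIntegrable
  have hIbound : ∀ (t a b : ℝ), Set.uIoc a b ⊆ Set.Icc 0 (D+ε) →
      ‖∫ θ in a..b, h θ • x (t - θ)‖ ≤ hNorm * Mx * |b - a| := by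
    intro t a b hsub
    refine intervalIntegral.norm_integral_le_of_norm_le_const ?_
    intro θ hθ
    rw [norm_smul]
    exact mul_le_mul (hhle θ (hsub hθ)) (hxle _) (norm_nonneg _) hNorm0
  have hsub0D : Set.uIcc (0:ℝ) D ⊆ Set.Icc 0 (D+ε) := by
    rw [Set.uIcc_of_le hD0]; exact Set.Icc_subset_Icc le_rfl (by linarith)
  -- the perturbation input w
  set w : ℝ → EuclideanSpace ℂ (Fin n) := fun t => x' t - (A (x t)
      + ∑ j : Fin J, Aj j (x (t - hd j)) + (∫ θ in (0:ℝ)..D, h θ • x (t - θ))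
      + B (Kconv μK k x t) + ∑ kk : Fin K, Bk kk (Kconv μK k x (t - T kk))) with hwdef
  have hwb : IsBddFun w := by
    refine ⟨Mx' + (‖A‖ * Cx + (∑ j : Fin J, ‖Aj j‖) * Cx + hNorm * Mx * |D - 0|
      + ‖B‖ * KB + (∑ kk : Fin K, ‖Bk kk‖) * KB), fun t => ?_⟩
    have h0 : ‖A (x t)‖ ≤ ‖A‖ * Cx :=
      le_trans (A.le_opNorm _) (mul_le_mul_of_nonneg_left (hCx t) (norm_nonneg A))
    have h1 : ‖∑ j : Fin J, Aj j (x (t - hd j))‖ ≤ (∑ j : Fin J, ‖Aj j‖) * Cx := by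
      refine le_trans (norm_sum_le _ _) ?_
      rw [Finset.sum_mul]
      exact Finset.sum_le_sum fun j _ => le_trans ((Aj j).le_opNorm _)
        (mul_le_mul_of_nonneg_left (hCx _) (norm_nonneg _))
    have h2 : ‖∫ θ in (0:ℝ)..D, h θ • x (t - θ)‖ ≤ hNorm * Mx * |D - 0| :=
      hIbound t 0 D (le_trans Set.uIoc_subset_uIcc hsub0D)
    have h3 : ‖B (Kconv μK k x t)‖ ≤ ‖B‖ * KB :=
      le_trans (B.le_opNorm _) (mul_le_mul_of_nonneg_left (hKxb t) (norm_nonneg B))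
    have h4 : ‖∑ kk : Fin K, Bk kk (Kconv μK k x (t - T kk))‖
        ≤ (∑ kk : Fin K, ‖Bk kk‖) * KB := by
      refine le_trans (norm_sum_le _ _) ?_
      rw [Finset.sum_mul]
      exact Finset.sum_le_sum fun kk _ => le_trans ((Bk kk).le_opNorm _)
        (mul_le_mul_of_nonneg_left (hKxb _) (norm_nonneg _))
    refine le_trans (norm_sub_le _ _) (add_le_add (hx'le t) ?_)
    exact le_trans (norm_add_le _ _) (add_le_add (le_trans (norm_add_le _ _)
      (add_le_add (le_trans (norm_add_le _ _) (add_le_add (le_trans (norm_add_le _ _)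
      (add_le_add h0 h1)) h2)) h3)) h4)
  -- x is an auxiliary solution with input w
  obtain ⟨hX, hX'⟩ := haux w x x' hwb hx hx0 (fun t ht => by simp only [hwdef]; abel) hxb hx'b
  set Mw : ℝ := supNorm w with hMw
  -- rewrite w on positive times
  have hw_eq : ∀ t > (0:ℝ), w t =
      (∑ j : Fin J, Aj j (x (t - τ j t) - x (t - hd j)))
      + (∫ θ in D..(δ t), h θ • x (t - θ))
      + (∑ kk : Fin K, Bk kk (Kconv μK k x (t - σ kk t) - Kconv μK k x (t - T kk)))
      + (B (r t) + ∑ kk : Fin K, Bk kk (r (t - σ kk t))) := by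
    intro t ht
    have hδt := hδb t
    have hsubδ : Set.uIcc (0:ℝ) (δ t) ⊆ Set.Icc 0 (D+ε) := by
      rw [Set.uIcc_of_le (by linarith [hδt.1] : (0:ℝ) ≤ δ t)]
      exact Set.Icc_subset_Icc le_rfl hδt.2
    have hsplit : (∫ θ in (0:ℝ)..(δ t), h θ • x (t - θ))
        - (∫ θ in (0:ℝ)..D, h θ • x (t - θ)) = ∫ θ in D..(δ t), h θ • x (t - θ) :=
      intervalIntegral.integral_interval_sub_left (hIint t 0 (δ t) hsubδ)
        (hIint t 0 D hsub0D)
    rw [hwdef]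
    simp only [heq t ht, map_sub, Finset.sum_sub_distrib]
    rw [← hsplit]
    abel
  -- the per-k difference bound via the controller gain
  have hKdiff : ∀ (kk : Fin K) (t : ℝ), 0 < t →
      ‖Kconv μK k x (t - σ kk t) - Kconv μK k x (t - T kk)‖ ≤ MK * (ν kk * Mx') := by
    intro kk t ht
    have hσt := hσb kk t
    by_cases htk : 0 < t - T kk + ν kk
    · set c : ℝ := σ kk t - T kk + ν kk with hc
      have hc0 : 0 ≤ c := by rw [hc]; linarith [hσt.1]
      set φ : ℝ → EuclideanSpace ℂ (Fin n) :=
        fun u => x (u - c) - x (u - ν kk) with hφdef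
      have hφ0 : ∀ u ≤ (0:ℝ), φ u = 0 := by
        intro u hu
        rw [hφdef]
        simp only [hx0 (u - c) (by linarith), hx0 (u - ν kk) (by linarith [hν0 kk]),
          sub_zero]
      have hφb : IsBddFun φ := ⟨Cx + Cx, fun u =>
        le_trans (norm_sub_le _ _) (add_le_add (hCx _) (hCx _))⟩
      have hφle : ∀ u, ‖φ u‖ ≤ ν kk * Mx' := by
        intro u
        rw [hφdef]
        refine le_trans (hlip (u - ν kk) (u - c)) ?_
        have habs : |u - c - (u - ν kk)| ≤ ν kk := by
          rw [abs_le]; constructor <;> [skip; skip] <;> rw [hc] <;>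
            [linarith [hσt.2]; linarith [hσt.1]]
        calc Mx' * |u - c - (u - ν kk)| ≤ Mx' * ν kk :=
              mul_le_mul_of_nonneg_left habs hMx'0
          _ = ν kk * Mx' := mul_comm _ _
      have hsupφ : supNorm φ ≤ ν kk * Mx' := supNorm_le fun u _ => hφle u
      have hgain := hKgain φ hφb hφ0
      have hid : Kconv μK k φ (t - T kk + ν kk)
          = Kconv μK k x (t - σ kk t) - Kconv μK k x (t - T kk) := by
        rw [hφdef]
        rw [kconv_sub (f := fun u => x (u - c)) (g := fun u => x (u - ν kk)) hkmeas hCk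
          (hxcont.comp (continuous_id.sub continuous_const))
          (hxcont.comp (continuous_id.sub continuous_const))
          (Cf := Cx) (Cg := Cx) (fun s => hCx _) (fun s => hCx _) (t - T kk + ν kk)]
        rw [kconv_shift (μK := μK) (k := k) x c (t - T kk + ν kk),
          kconv_shift (μK := μK) (k := k) x (ν kk) (t - T kk + ν kk)]
        have e1 : t - T kk + ν kk - c = t - σ kk t := by rw [hc]; ring
        have e2 : t - T kk + ν kk - ν kk = t - T kk := by ring
        rw [e1, e2]
      have hKφb : IsBddFun (Kconv μK k φ) := by
        obtain ⟨Cφ, hCφ⟩ := hφb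
        exact ⟨Ck * Cφ * (μK Set.univ).toReal, kconv_norm_le hCk hCφ⟩
      calc ‖Kconv μK k x (t - σ kk t) - Kconv μK k x (t - T kk)‖
          = ‖Kconv μK k φ (t - T kk + ν kk)‖ := by rw [hid]
        _ ≤ supNorm (Kconv μK k φ) := norm_le_supNorm hKφb htk
        _ ≤ MK * supNorm φ := hgain
        _ ≤ MK * (ν kk * Mx') := mul_le_mul_of_nonneg_left hsupφ hMK0
    · push_neg at htk
      have h1 : t - σ kk t ≤ 0 := by linarith [hσt.1]
      have h2 : t - T kk ≤ 0 := by linarith [hν0 kk]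
      rw [kconv_zero hμKsupp hx0 h1, kconv_zero hμKsupp hx0 h2, sub_self]
      simp only [norm_zero]
      exact mul_nonneg hMK0 (mul_nonneg (hν0 kk) hMx'0)
  -- pointwise bound on w
  have hwle : ∀ t > (0:ℝ), ‖w t‖ ≤ SA * Mx' + ε * hNorm * Mx + SB * MK * Mx' + CB * Mr := by
    intro t ht
    rw [hw_eq t ht]
    have hδt := hδb t
    have e1 : ‖∑ j : Fin J, Aj j (x (t - τ j t) - x (t - hd j))‖ ≤ SA * Mx' := by
      refine le_trans (norm_sum_le _ _) ?_
      rw [hSA, Finset.sum_mul]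
      refine Finset.sum_le_sum fun j _ => ?_
      have hτt := hτb j t
      have habs : |t - τ j t - (t - hd j)| ≤ μ j := by
        rw [abs_le]; constructor <;> linarith [hτt.1, hτt.2]
      calc ‖Aj j (x (t - τ j t) - x (t - hd j))‖
          ≤ ‖Aj j‖ * ‖x (t - τ j t) - x (t - hd j)‖ := (Aj j).le_opNorm _
        _ ≤ ‖Aj j‖ * (Mx' * μ j) := by
            refine mul_le_mul_of_nonneg_left ?_ (norm_nonneg _)
            exact le_trans (hlip (t - hd j) (t - τ j t))
              (mul_le_mul_of_nonneg_left habs hMx'0)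
        _ = μ j * ‖Aj j‖ * Mx' := by ring
    have e2 : ‖∫ θ in D..(δ t), h θ • x (t - θ)‖ ≤ ε * hNorm * Mx := by
      have hsubI : Set.uIoc D (δ t) ⊆ Set.Icc 0 (D+ε) := by
        intro θ hθ
        rcases Set.mem_uIoc.mp hθ with ⟨ha, hb⟩ | ⟨ha, hb⟩ <;>
          exact ⟨by linarith [hδt.1], by linarith [hδt.2]⟩
      refine le_trans (hIbound t D (δ t) hsubI) ?_
      have habs : |δ t - D| ≤ ε := by rw [abs_le]; exact ⟨by linarith [hδt.1], by linarith [hδt.2]⟩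
      calc hNorm * Mx * |δ t - D| ≤ hNorm * Mx * ε :=
            mul_le_mul_of_nonneg_left habs (mul_nonneg hNorm0 hMx0)
        _ = ε * hNorm * Mx := by ring
    have e3 : ‖∑ kk : Fin K, Bk kk (Kconv μK k x (t - σ kk t) - Kconv μK k x (t - T kk))‖
        ≤ SB * MK * Mx' := by
      refine le_trans (norm_sum_le _ _) ?_
      rw [hSB, Finset.sum_mul, Finset.sum_mul]
      refine Finset.sum_le_sum fun kk _ => ?_
      calc ‖Bk kk (Kconv μK k x (t - σ kk t) - Kconv μK k x (t - T kk))‖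
          ≤ ‖Bk kk‖ * ‖Kconv μK k x (t - σ kk t) - Kconv μK k x (t - T kk)‖ :=
            (Bk kk).le_opNorm _
        _ ≤ ‖Bk kk‖ * (MK * (ν kk * Mx')) :=
            mul_le_mul_of_nonneg_left (hKdiff kk t ht) (norm_nonneg _)
        _ = ν kk * ‖Bk kk‖ * MK * Mx' := by ring
    have e4 : ‖B (r t) + ∑ kk : Fin K, Bk kk (r (t - σ kk t))‖ ≤ CB * Mr := by
      refine le_trans (norm_add_le _ _) ?_
      rw [hCB, add_mul]
      refine add_le_add (le_trans (B.le_opNorm _)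
        (mul_le_mul_of_nonneg_left (hrle _) (norm_nonneg _))) ?_
      refine le_trans (norm_sum_le _ _) ?_
      rw [Finset.sum_mul]
      exact Finset.sum_le_sum fun kk _ => le_trans ((Bk kk).le_opNorm _)
        (mul_le_mul_of_nonneg_left (hrle _) (norm_nonneg _))
    refine le_trans (norm_add_le _ _) ?_
    refine add_le_add ?_ e4
    refine le_trans (norm_add_le _ _) ?_
    refine add_le_add ?_ e3
    exact le_trans (norm_add_le _ _) (add_le_add e1 e2)
  -- close the loop
  have hMwle : Mw ≤ κ * (Mcl * Mw) + CB * Mr := by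
    rw [hMw]
    refine supNorm_le fun t ht => le_trans (hwle t ht) ?_
    have c1 : SA * Mx' ≤ SA * (Mcl * Mw) := mul_le_mul_of_nonneg_left hX' hSA0
    have c2 : ε * hNorm * Mx ≤ ε * hNorm * (Mcl * Mw) :=
      mul_le_mul_of_nonneg_left hX (mul_nonneg hε0 hNorm0)
    have c3 : SB * MK * Mx' ≤ SB * MK * (Mcl * Mw) :=
      mul_le_mul_of_nonneg_left hX' (mul_nonneg hSB0 hMK0)
    rw [hκ]
    nlinarith [c1, c2, c3]
  have hMw0 : 0 ≤ Mw := supNorm_nonneg hwb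
  have hkey : Mw * (1 - Mcl * κ) ≤ CB * Mr := by nlinarith [hMwle]
  have hMwfin : Mw ≤ CB * Mr / (1 - Mcl * κ) := (le_div_iff₀ hden).mpr hkey
  calc supNorm x ≤ Mcl * Mw := hX
    _ ≤ Mcl * (CB * Mr / (1 - Mcl * κ)) := mul_le_mul_of_nonneg_left hMwfin hMcl0
    _ = Mcl * CB / (1 - Mcl * κ) * Mr := by field_simp
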